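/- arXiv:math/0507207 — 2 statements merged into one kernel-verified Lean document; each statement's English description precedes it below -/
import Mathlib

section
/- The metric space (Δ, d_L) is compact, and hence complete. -/
open Set Filter Topology

/-- The modified Lévy distance between two functions `F G : ℝ → ℝ`:
the infimum of all `h > 0` such that for every `x ∈ (-1/h, 1/h)` the inequalities
`F (x - h) - h ≤ G x ≤ F (x + h) + h` and `G (x - h) - h ≤ F x ≤ G (x + h) + h` hold. -/
noncomputable def dL (F G : ℝ → ℝ) : ℝ :=
  sInf {h : ℝ | 0 < h ∧ ∀ x ∈ Set.Ioo (-h⁻¹) h⁻¹,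
    (F (x - h) - h ≤ G x ∧ G x ≤ F (x + h) + h) ∧
    (G (x - h) - h ≤ F x ∧ F x ≤ G (x + h) + h)}

/-- A distribution function: a nondecreasing, left-continuous function `F : ℝ → [0,1]`
(the extension to `±∞` by `0`, `1` being implicit). `Δ` is the set of all such functions. -/
def IsDistributionFn (F : ℝ → ℝ) : Prop :=
  Monotone F ∧ (∀ x : ℝ, ContinuousWithinAt F (Set.Iio x) x) ∧
    (∀ x : ℝ, 0 ≤ F x) ∧ (∀ x : ℝ, F x ≤ 1)

def S (F G : ℝ → ℝ) : Set ℝ :=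
  {h : ℝ | 0 < h ∧ ∀ x ∈ Set.Ioo (-h⁻¹) h⁻¹,
    (F (x - h) - h ≤ G x ∧ G x ≤ F (x + h) + h) ∧
    (G (x - h) - h ≤ F x ∧ F x ≤ G (x + h) + h)}

lemma dL_eq (F G : ℝ → ℝ) : dL F G = sInf (S F G) := rfl

lemma one_mem_S {F G : ℝ → ℝ} (hF0 : ∀ x, 0 ≤ F x) (hF1 : ∀ x, F x ≤ 1)
    (hG0 : ∀ x, 0 ≤ G x) (hG1 : ∀ x, G x ≤ 1) : (1:ℝ) ∈ S F G := by
  refine ⟨one_pos, fun x _ => ⟨⟨?_, ?_⟩, ⟨?_, ?_⟩⟩⟩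
  · linarith [hF1 (x-1), hG0 x]
  · linarith [hF0 (x+1), hG1 x]
  · linarith [hG1 (x-1), hF0 x]
  · linarith [hG0 (x+1), hF1 x]

lemma bddBelow_S (F G : ℝ → ℝ) : BddBelow (S F G) := ⟨0, fun h hh => hh.1.le⟩

lemma dL_nonneg (F G : ℝ → ℝ) : 0 ≤ dL F G :=
  Real.sInf_nonneg (fun x hx => hx.1.le)

lemma dL_le_of_mem {F G : ℝ → ℝ} {h : ℝ} (hh : h ∈ S F G) : dL F G ≤ h :=
  csInf_le (bddBelow_S F G) hh

lemma S_upward {F G : ℝ → ℝ} (hF : Monotone F) (hG : Monotone G) {h h' : ℝ}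
    (hh : h ∈ S F G) (hle : h ≤ h') : h' ∈ S F G := by
  obtain ⟨hpos, hcond⟩ := hh
  have hpos' : 0 < h' := lt_of_lt_of_le hpos hle
  refine ⟨hpos', fun x hx => ?_⟩
  have hxw : x ∈ Set.Ioo (-h⁻¹) h⁻¹ := by
    have hinv : h'⁻¹ ≤ h⁻¹ := inv_anti₀ hpos hle
    exact ⟨lt_of_le_of_lt (by linarith) hx.1, lt_of_lt_of_le hx.2 hinv⟩
  obtain ⟨⟨a1, a2⟩, ⟨a3, a4⟩⟩ := hcond x hxw
  have m1 : F (x - h') ≤ F (x - h) := hF (by linarith)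
  have m2 : F (x + h) ≤ F (x + h') := hF (by linarith)
  have m3 : G (x - h') ≤ G (x - h) := hG (by linarith)
  have m4 : G (x + h) ≤ G (x + h') := hG (by linarith)
  exact ⟨⟨by linarith, by linarith⟩, ⟨by linarith, by linarith⟩⟩

lemma mem_S_of_lt {F G : ℝ → ℝ} (hF : Monotone F) (hG : Monotone G)
    (hne : (S F G).Nonempty) {h : ℝ} (hlt : dL F G < h) : h ∈ S F G := by
  rw [dL_eq] at hlt
  obtain ⟨y, hy, hyh⟩ := exists_lt_of_csInf_lt hne hlt
  exact S_upward hF hG hy hyh.le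

lemma inv_window {a b : ℝ} (ha : 0 < a) (hb : 0 < b) (hab : a*(a+b) ≤ 1) :
    (a+b)⁻¹ + b ≤ a⁻¹ := by
  have hsum : (0:ℝ) < a + b := by linarith
  have e1 : (a+b) * (a+b)⁻¹ = 1 := mul_inv_cancel₀ hsum.ne'
  have e2 : a * a⁻¹ = 1 := mul_inv_cancel₀ ha.ne'
  have key : b * (1 - a*(a+b)) ≥ 0 := mul_nonneg hb.le (by linarith)
  have hi1 : 0 < (a+b)⁻¹ := inv_pos.2 hsum
  have hi2 : 0 < a⁻¹ := inv_pos.2 ha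
  nlinarith [mul_pos ha hsum, mul_pos hi1 hi2]

lemma S_add {F G H : ℝ → ℝ} {h1 h2 : ℝ}
    (hm1 : h1 ∈ S F G) (hm2 : h2 ∈ S G H)
    (hc1 : h1*(h1+h2) ≤ 1) (hc2 : h2*(h1+h2) ≤ 1) : (h1+h2) ∈ S F H := by
  obtain ⟨hp1, hcond1⟩ := hm1
  obtain ⟨hp2, hcond2⟩ := hm2
  have hps : (0:ℝ) < h1 + h2 := by linarith
  refine ⟨hps, fun x hx => ?_⟩
  obtain ⟨hxl, hxr⟩ := hx
  have w1 : (h1+h2)⁻¹ + h2 ≤ h1⁻¹ := inv_window hp1 hp2 hc1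
  have w2 : (h1+h2)⁻¹ + h1 ≤ h2⁻¹ := by
    have := inv_window hp2 hp1 (by linarith [hc2])
    rwa [add_comm h2 h1] at this
  have hi1 : (h1+h2)⁻¹ ≤ h1⁻¹ := by linarith
  have hi2 : (h1+h2)⁻¹ ≤ h2⁻¹ := by linarith
  have mx1 : x ∈ Set.Ioo (-h1⁻¹) h1⁻¹ := ⟨by linarith, by linarith⟩
  have mx2 : x ∈ Set.Ioo (-h2⁻¹) h2⁻¹ := ⟨by linarith, by linarith⟩
  have mxm2 : x - h2 ∈ Set.Ioo (-h1⁻¹) h1⁻¹ := ⟨by linarith, by linarith⟩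
  have mxp2 : x + h2 ∈ Set.Ioo (-h1⁻¹) h1⁻¹ := ⟨by linarith, by linarith⟩
  have mxm1 : x - h1 ∈ Set.Ioo (-h2⁻¹) h2⁻¹ := ⟨by linarith, by linarith⟩
  have mxp1 : x + h1 ∈ Set.Ioo (-h2⁻¹) h2⁻¹ := ⟨by linarith, by linarith⟩
  have e1 : x - (h1 + h2) = x - h2 - h1 := by ring
  have e2 : x + (h1 + h2) = x + h2 + h1 := by ring
  have e3 : x - (h1 + h2) = x - h1 - h2 := by ring
  have e4 : x + (h1 + h2) = x + h1 + h2 := by ring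
  refine ⟨⟨?_, ?_⟩, ⟨?_, ?_⟩⟩
  · have a1 : G (x - h2) - h2 ≤ H x := ((hcond2 x mx2).1).1
    have a2 : F (x - h2 - h1) - h1 ≤ G (x - h2) := ((hcond1 (x - h2) mxm2).1).1
    rw [e1]; linarith
  · have a1 : H x ≤ G (x + h2) + h2 := ((hcond2 x mx2).1).2
    have a2 : G (x + h2) ≤ F (x + h2 + h1) + h1 := ((hcond1 (x + h2) mxp2).1).2
    rw [e2]; linarith
  · have a1 : G (x - h1) - h1 ≤ F x := ((hcond1 x mx1).2).1
    have a2 : H (x - h1 - h2) - h2 ≤ G (x - h1) := ((hcond2 (x - h1) mxm1).2).1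
    rw [e3]; linarith
  · have a1 : F x ≤ G (x + h1) + h1 := ((hcond1 x mx1).2).2
    have a2 : G (x + h1) ≤ H (x + h1 + h2) + h2 := ((hcond2 (x + h1) mxp1).2).2
    rw [e4]; linarith

lemma grid {s : ℝ} (hs : 0 < s) (a : ℝ) :
    ∃ j : ℤ, a ≤ j * s ∧ (j:ℝ) * s < a + s ∧ |(j:ℝ)| ≤ |a|/s + 1 := by
  refine ⟨⌈a / s⌉, ?_, ?_, ?_⟩
  · rw [← div_le_iff₀ hs]
    exact Int.le_ceil _
  · have h1 : (⌈a/s⌉ : ℝ) < a/s + 1 := Int.ceil_lt_add_one (a/s)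
    have h2 : (a/s + 1) * s = a + s := by field_simp
    nlinarith
  · have h1 : (⌈a/s⌉ : ℝ) < a/s + 1 := Int.ceil_lt_add_one (a/s)
    have h2 : a/s ≤ (⌈a/s⌉ : ℝ) := Int.le_ceil _
    have h3 : -(|a|/s) ≤ a/s := by
      rw [← neg_div]
      exact div_le_div_of_nonneg_right (neg_abs_le a) hs.le
    have h4 : a/s ≤ |a|/s := div_le_div_of_nonneg_right (le_abs_self a) hs.le
    rw [abs_le]
    constructor <;> linarith

lemma tendsto_dL {Gk : ℕ → ℝ → ℝ} {g : ℚ → ℝ} {F : ℝ → ℝ}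
    (hGm : ∀ k, Monotone (Gk k))
    (hA : ∀ (q : ℚ) (x : ℝ), (q:ℝ) < x → g q ≤ F x)
    (hB : ∀ (q : ℚ) (x : ℝ), x ≤ (q:ℝ) → F x ≤ g q)
    (hconv : ∀ q : ℚ, Tendsto (fun k => Gk k (q:ℝ)) atTop (𝓝 (g q))) :
    Tendsto (fun k => dL (Gk k) F) atTop (𝓝 0) := by
  rw [Metric.tendsto_atTop]
  intro ε hε
  set h : ℝ := ε/2 with hdef
  have hh : 0 < h := by positivity
  have hh2 : 0 < h/2 := by positivity
  obtain ⟨s, hs0, hs1⟩ := exists_rat_btwn hh2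
  have hspos : (0:ℝ) < (s:ℝ) := by exact_mod_cast hs0
  set M : ℤ := ⌈(h⁻¹ + h + 1)/(s:ℝ)⌉ + 1 with hM
  have hMb : (h⁻¹ + h)/(s:ℝ) + 1 ≤ (M:ℝ) := by
    have hle : ((h⁻¹ + h + 1)/(s:ℝ)) ≤ (⌈(h⁻¹ + h + 1)/(s:ℝ)⌉ : ℝ) := Int.le_ceil _
    have hd : (h⁻¹ + h)/(s:ℝ) ≤ (h⁻¹ + h + 1)/(s:ℝ) :=
      div_le_div_of_nonneg_right (by linarith) hspos.le
    have : (M:ℝ) = (⌈(h⁻¹ + h + 1)/(s:ℝ)⌉ : ℝ) + 1 := by rw [hM]; push_cast; ring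
    linarith
  have pick : ∀ a : ℝ, |a| ≤ h⁻¹ + h → ∃ j : ℤ, j ∈ Finset.Icc (-M) M ∧
      a ≤ (j:ℝ)*(s:ℝ) ∧ (j:ℝ)*(s:ℝ) ≤ a + h/2 := by
    intro a ha
    obtain ⟨j, hj1, hj2, hj3⟩ := grid hspos a
    have hs1' : (s:ℝ) < h/2 := by exact_mod_cast hs1
    refine ⟨j, ?_, hj1, by linarith⟩
    have habs : |(j:ℝ)| ≤ (M:ℝ) := by
      refine hj3.trans ?_
      have : |a|/(s:ℝ) ≤ (h⁻¹+h)/(s:ℝ) := div_le_div_of_nonneg_right ha hspos.le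
      linarith
    rw [Finset.mem_Icc]
    obtain ⟨hl, hr⟩ := abs_le.1 habs
    constructor
    · exact_mod_cast hl
    · exact_mod_cast hr
  have hcast : ∀ j : ℤ, (((j:ℚ)*s : ℚ) : ℝ) = (j:ℝ)*(s:ℝ) := by intro j; push_cast; ring
  have hev : ∀ᶠ k in atTop, ∀ j ∈ Finset.Icc (-M) M,
      |Gk k ((j:ℝ)*(s:ℝ)) - g ((j:ℚ)*s)| < h/2 := by
    rw [Filter.eventually_all_finset]
    intro j _
    have := (Metric.tendsto_nhds.mp (hconv ((j:ℚ)*s))) (h/2) hh2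
    simpa [Real.dist_eq, hcast j] using this
  obtain ⟨N, hN⟩ := Filter.eventually_atTop.mp hev
  refine ⟨N, fun k hk => ?_⟩
  have hgrid := hN k hk
  have hhinv : 0 < h⁻¹ := inv_pos.2 hh
  have hmemS : h ∈ S (Gk k) F := by
    refine ⟨hh, fun x hx => ?_⟩
    obtain ⟨hxl, hxr⟩ := hx
    refine ⟨⟨?_, ?_⟩, ⟨?_, ?_⟩⟩
    · -- Gk k (x - h) - h ≤ F x
      obtain ⟨j, hj, hj1, hj2⟩ := pick (x - h) (abs_le.2 ⟨by linarith, by linarith⟩)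
      obtain ⟨d1, d2⟩ := abs_lt.1 (hgrid j hj)
      have m1 : Gk k (x - h) ≤ Gk k ((j:ℝ)*(s:ℝ)) := hGm k hj1
      have a1 : g ((j:ℚ)*s) ≤ F x := by
        apply hA
        rw [hcast j]; linarith
      linarith
    · -- F x ≤ Gk k (x + h) + h
      obtain ⟨j, hj, hj1, hj2⟩ := pick x (abs_le.2 ⟨by linarith, by linarith⟩)
      obtain ⟨d1, d2⟩ := abs_lt.1 (hgrid j hj)
      have m1 : Gk k ((j:ℝ)*(s:ℝ)) ≤ Gk k (x + h) := hGm k (by linarith)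
      have a1 : F x ≤ g ((j:ℚ)*s) := by
        apply hB
        rw [hcast j]; linarith
      linarith
    · -- F (x - h) - h ≤ Gk k x
      obtain ⟨j, hj, hj1, hj2⟩ := pick (x - h) (abs_le.2 ⟨by linarith, by linarith⟩)
      obtain ⟨d1, d2⟩ := abs_lt.1 (hgrid j hj)
      have m1 : Gk k ((j:ℝ)*(s:ℝ)) ≤ Gk k x := hGm k (by linarith)
      have a1 : F (x - h) ≤ g ((j:ℚ)*s) := by
        apply hB
        rw [hcast j]; linarith
      linarith
    · -- Gk k x ≤ F (x + h) + h
      obtain ⟨j, hj, hj1, hj2⟩ := pick x (abs_le.2 ⟨by linarith, by linarith⟩)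
      obtain ⟨d1, d2⟩ := abs_lt.1 (hgrid j hj)
      have m1 : Gk k x ≤ Gk k ((j:ℝ)*(s:ℝ)) := hGm k hj1
      have a1 : g ((j:ℚ)*s) ≤ F (x + h) := by
        apply hA
        rw [hcast j]; linarith
      linarith
  have hle : dL (Gk k) F ≤ h := dL_le_of_mem hmemS
  have hnn : 0 ≤ dL (Gk k) F := dL_nonneg _ _
  rw [Real.dist_eq, sub_zero, abs_of_nonneg hnn]
  linarith

lemma helly (Fn : ℕ → ℝ → ℝ) (hFn : ∀ n, IsDistributionFn (Fn n)) :
    ∃ F : ℝ → ℝ, IsDistributionFn F ∧ ∃ φ : ℕ → ℕ, StrictMono φ ∧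
      Tendsto (fun k => dL (Fn (φ k)) F) atTop (𝓝 0) := by
  set u : ℕ → (ℚ → Set.Icc (0:ℝ) 1) :=
    fun n q => ⟨Fn n q, (hFn n).2.2.1 q, (hFn n).2.2.2 q⟩ with hu
  obtain ⟨g0, -, φ, hφ, hconv0⟩ :=
    IsCompact.tendsto_subseq (x := u) isCompact_univ (fun n => Set.mem_univ (u n))
  set g : ℚ → ℝ := fun q => (g0 q : ℝ) with hg
  have hconv : ∀ q : ℚ, Tendsto (fun k => Fn (φ k) (q:ℝ)) atTop (𝓝 (g q)) := by
    intro q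
    have h1 : Tendsto (fun k => u (φ k) q) atTop (𝓝 (g0 q)) := by
      exact tendsto_pi_nhds.mp hconv0 q
    exact (continuous_subtype_val.tendsto (g0 q)).comp h1
  have gmono : ∀ q r : ℚ, q ≤ r → g q ≤ g r := by
    intro q r hqr
    exact le_of_tendsto_of_tendsto' (hconv q) (hconv r)
      (fun k => (hFn (φ k)).1 (by exact_mod_cast hqr))
  have g0le : ∀ q, 0 ≤ g q := fun q => (g0 q).2.1
  have g1le : ∀ q, g q ≤ 1 := fun q => (g0 q).2.2
  set F : ℝ → ℝ := fun x => sSup (g '' {q : ℚ | (q:ℝ) < x}) with hF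
  have hne : ∀ x : ℝ, (g '' {q : ℚ | (q:ℝ) < x}).Nonempty := by
    intro x
    obtain ⟨q, hq⟩ := exists_rat_lt x
    exact ⟨g q, ⟨q, hq, rfl⟩⟩
  have hbdd : ∀ x : ℝ, BddAbove (g '' {q : ℚ | (q:ℝ) < x}) := by
    intro x
    refine ⟨1, ?_⟩
    rintro y ⟨q, -, rfl⟩
    exact g1le q
  have hA : ∀ (q : ℚ) (x : ℝ), (q:ℝ) < x → g q ≤ F x :=
    fun q x hq => le_csSup (hbdd x) ⟨q, hq, rfl⟩
  have hB : ∀ (q : ℚ) (x : ℝ), x ≤ (q:ℝ) → F x ≤ g q := by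
    intro r x hx
    apply csSup_le (hne x)
    rintro y ⟨q, hq, rfl⟩
    apply gmono
    have : (q:ℝ) < (r:ℝ) := lt_of_lt_of_le hq hx
    exact_mod_cast this.le
  have hF0 : ∀ x, 0 ≤ F x := by
    intro x
    obtain ⟨q, hq⟩ := exists_rat_lt x
    exact le_trans (g0le q) (hA q x hq)
  have hF1 : ∀ x, F x ≤ 1 := by
    intro x
    apply csSup_le (hne x)
    rintro y ⟨q, -, rfl⟩
    exact g1le q
  have hFmono : Monotone F := by
    intro x y hxy
    apply csSup_le_csSup (hbdd y) (hne x)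
    apply Set.image_mono
    intro q hq
    exact lt_of_lt_of_le hq hxy
  have hFlc : ∀ x : ℝ, ContinuousWithinAt F (Set.Iio x) x := by
    intro x
    have h1 : Tendsto F (nhdsWithin x (Set.Iio x)) (𝓝 (sSup (F '' Set.Iio x))) :=
      hFmono.tendsto_nhdsLT x
    have hbddF : BddAbove (F '' Set.Iio x) := by
      refine ⟨1, ?_⟩
      rintro y ⟨z, -, rfl⟩
      exact hF1 z
    have hneF : (F '' Set.Iio x).Nonempty := ⟨F (x-1), ⟨x-1, by simp, rfl⟩⟩
    have heq : sSup (F '' Set.Iio x) = F x := by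
      apply le_antisymm
      · apply csSup_le hneF
        rintro y ⟨z, hz, rfl⟩
        exact hFmono (le_of_lt hz)
      · apply csSup_le (hne x)
        rintro y ⟨q, hq, rfl⟩
        have hy : ((q:ℝ) + x)/2 < x := by
          simp only [Set.mem_setOf_eq] at hq
          linarith
        have hqy : (q:ℝ) < ((q:ℝ) + x)/2 := by
          simp only [Set.mem_setOf_eq] at hq
          linarith
        exact le_trans (hA q _ hqy) (le_csSup hbddF ⟨_, hy, rfl⟩)
    rw [heq] at h1
    exact h1
  refine ⟨F, ⟨hFmono, hFlc, hF0, hF1⟩, φ, hφ, ?_⟩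
  exact tendsto_dL (fun k => (hFn (φ k)).1) hA hB hconv

/-- The metric space `(Δ, dL)` is compact (sequentially, which is equivalent for metric
spaces), and hence complete. -/
theorem delta_compact_and_complete :
    (∀ Fn : ℕ → ℝ → ℝ, (∀ n, IsDistributionFn (Fn n)) →
      ∃ F : ℝ → ℝ, IsDistributionFn F ∧ ∃ φ : ℕ → ℕ, StrictMono φ ∧
        Filter.Tendsto (fun k => dL (Fn (φ k)) F) Filter.atTop (nhds 0)) ∧
    (∀ Fn : ℕ → ℝ → ℝ, (∀ n, IsDistributionFn (Fn n)) →
      (∀ ε : ℝ, 0 < ε → ∃ N : ℕ, ∀ m ≥ N, ∀ n ≥ N, dL (Fn m) (Fn n) < ε) →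
      ∃ F : ℝ → ℝ, IsDistributionFn F ∧
        Filter.Tendsto (fun n => dL (Fn n) F) Filter.atTop (nhds 0)) := by
  constructor
  · exact helly
  · intro Fn hFn hCauchy
    obtain ⟨F, hF, φ, hφ, hconv⟩ := helly Fn hFn
    refine ⟨F, hF, ?_⟩
    rw [Metric.tendsto_atTop]
    intro ε hε
    set ε' : ℝ := min ε 1 with hε'def
    have hε'pos : 0 < ε' := lt_min hε one_pos
    have hε'le1 : ε' ≤ 1 := min_le_right _ _
    have hε'leε : ε' ≤ ε := min_le_left _ _
    obtain ⟨N1, hN1⟩ := hCauchy (ε'/4) (by positivity)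
    rw [Metric.tendsto_atTop] at hconv
    obtain ⟨K, hK⟩ := hconv (ε'/4) (by positivity)
    set k0 : ℕ := max K N1 with hk0
    have hφk0 : φ k0 ≥ N1 := le_trans (le_max_right K N1) (hφ.le_apply)
    have hdk : dL (Fn (φ k0)) F < ε'/4 := by
      have := hK k0 (le_max_left K N1)
      rwa [Real.dist_eq, sub_zero, abs_of_nonneg (dL_nonneg _ _)] at this
    refine ⟨N1, fun n hn => ?_⟩
    have hd1 : dL (Fn n) (Fn (φ k0)) < ε'/4 := hN1 n hn (φ k0) hφk0
    have hmono : ∀ m, Monotone (Fn m) := fun m => (hFn m).1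
    have h1mem : (ε'/4 : ℝ) ∈ S (Fn n) (Fn (φ k0)) := by
      apply mem_S_of_lt (hmono n) (hmono (φ k0))
        ⟨1, one_mem_S (hFn n).2.2.1 (hFn n).2.2.2 (hFn (φ k0)).2.2.1 (hFn (φ k0)).2.2.2⟩ hd1
    have h2mem : (ε'/4 : ℝ) ∈ S (Fn (φ k0)) F := by
      apply mem_S_of_lt (hmono (φ k0)) hF.1
        ⟨1, one_mem_S (hFn (φ k0)).2.2.1 (hFn (φ k0)).2.2.2 hF.2.2.1 hF.2.2.2⟩ hdk
    have hsum : (ε'/4 + ε'/4 : ℝ) ∈ S (Fn n) F := by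
      apply S_add h1mem h2mem <;> nlinarith
    have : dL (Fn n) F ≤ ε'/4 + ε'/4 := dL_le_of_mem hsum
    rw [Real.dist_eq, sub_zero, abs_of_nonneg (dL_nonneg _ _)]
    linarith
end

section
/- Let (L, ρ, τ) be a probabilistic metric space with sup-continuous triangle function τ, let A, B be nonempty closed subsets of L and p ∈ L. Then F_{pB} ≥ τ(F_{pA}, F*_{AB}). -/
/-- A distance distribution function: a nondecreasing, left-continuous function
`F : ℝ → [0,1]` with `F x = 0` for all `x ≤ 0`.  `Δ⁺` is the set of all such functions. -/
def IsDDF (F : ℝ → ℝ) : Prop :=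
  Monotone F ∧ (∀ x : ℝ, ContinuousWithinAt F (Set.Iio x) x) ∧
    (∀ x : ℝ, F x ≤ 1) ∧ (∀ x : ℝ, x ≤ 0 → F x = 0)

/-- The distance distribution function `ε₀`. -/
noncomputable def eps0 : ℝ → ℝ := fun x => if x ≤ 0 then 0 else 1

/-- A triangle function `τ` on `Δ⁺`: commutative, associative, nondecreasing in each
argument, continuous (sequentially, with respect to the modified Lévy metric `dL`,
which metrizes the topology of weak convergence), with identity `ε₀`. -/
structure IsTriangleFn (τ : (ℝ → ℝ) → (ℝ → ℝ) → (ℝ → ℝ)) : Prop where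
  isDDF : ∀ F G, IsDDF F → IsDDF G → IsDDF (τ F G)
  comm : ∀ F G, IsDDF F → IsDDF G → τ F G = τ G F
  assoc : ∀ F G K, IsDDF F → IsDDF G → IsDDF K → τ (τ F G) K = τ F (τ G K)
  mono : ∀ F₁ F₂ G₁ G₂, IsDDF F₁ → IsDDF F₂ → IsDDF G₁ → IsDDF G₂ →
    F₁ ≤ F₂ → G₁ ≤ G₂ → τ F₁ G₁ ≤ τ F₂ G₂
  ident : ∀ F, IsDDF F → τ F eps0 = F
  continuous : ∀ (Fn Gn : ℕ → ℝ → ℝ) (F G : ℝ → ℝ),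
    (∀ n, IsDDF (Fn n)) → (∀ n, IsDDF (Gn n)) → IsDDF F → IsDDF G →
    Filter.Tendsto (fun n => dL (Fn n) F) Filter.atTop (nhds 0) →
    Filter.Tendsto (fun n => dL (Gn n) G) Filter.atTop (nhds 0) →
    Filter.Tendsto (fun n => dL (τ (Fn n) (Gn n)) (τ F G)) Filter.atTop (nhds 0)

/-- A probabilistic metric space `(L, ρ, τ)`. -/
structure IsPMSpace {L : Type*} (ρ : L → L → ℝ → ℝ)
    (τ : (ℝ → ℝ) → (ℝ → ℝ) → (ℝ → ℝ)) : Prop where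
  isDDF : ∀ p q, IsDDF (ρ p q)
  triangleFn : IsTriangleFn τ
  refl : ∀ p, ρ p p = eps0
  eq_of : ∀ p q, ρ p q = eps0 → p = q
  symm : ∀ p q, ρ p q = ρ q p
  tri_ineq : ∀ p q r, τ (ρ p q) (ρ q r) ≤ ρ p r

/-- `τ` is sup-continuous: `τ (sup_i F_i) G = sup_i τ (F_i) G` pointwise, for every
(nonempty) family `{F_i} ⊆ Δ⁺` and every `G ∈ Δ⁺`. -/
def SupContinuous (τ : (ℝ → ℝ) → (ℝ → ℝ) → (ℝ → ℝ)) : Prop :=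
  ∀ (ι : Type) [Nonempty ι] (Fi : ι → ℝ → ℝ) (G : ℝ → ℝ),
    (∀ i, IsDDF (Fi i)) → IsDDF G →
    ∀ x : ℝ, τ (fun y => ⨆ i, Fi i y) G x = ⨆ i, τ (Fi i) G x

/-- Condition (W): for all `F, G ∈ Δ⁺`, `x > 0` and real `α, β`,
`F x > α` and `G x > β` imply `τ F G x > max (α + β - 1) 0`. -/
def CondW (τ : (ℝ → ℝ) → (ℝ → ℝ) → (ℝ → ℝ)) : Prop :=
  ∀ F G, IsDDF F → IsDDF G → ∀ x : ℝ, 0 < x → ∀ α β : ℝ,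
    α < F x → β < G x → max (α + β - 1) 0 < τ F G x

/-- Convergence of a sequence in the strong topology of the PM space:
for every `t > 0`, eventually `F_{p_n p}(t) > 1 - t`. -/
def SConvSeq {L : Type*} (ρ : L → L → ℝ → ℝ) (pn : ℕ → L) (p : L) : Prop :=
  ∀ t : ℝ, 0 < t → ∃ n₀ : ℕ, ∀ n ≥ n₀, 1 - t < ρ (pn n) p t

/-- Cauchy sequence in a PM space. -/
def SCauchySeq {L : Type*} (ρ : L → L → ℝ → ℝ) (pn : ℕ → L) : Prop :=
  ∀ t : ℝ, 0 < t → ∃ n₀ : ℕ, ∀ m ≥ n₀, ∀ n ≥ n₀, 1 - t < ρ (pn m) (pn n) t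

/-- Completeness of a PM space: every Cauchy sequence converges in the strong topology. -/
def SComplete {L : Type*} (ρ : L → L → ℝ → ℝ) : Prop :=
  ∀ pn : ℕ → L, SCauchySeq ρ pn → ∃ p : L, SConvSeq ρ pn p

/-- The closure of a set in the strong topology of a PM space (the strong topology is
metrizable, so the closure coincides with the sequential closure). -/
def SClosure {L : Type*} (ρ : L → L → ℝ → ℝ) (A : Set L) : Set L :=
  {q | ∃ pn : ℕ → L, (∀ n, pn n ∈ A) ∧ SConvSeq ρ pn q}

/-- A set closed in the strong topology of a PM space. -/
def SClosed {L : Type*} (ρ : L → L → ℝ → ℝ) (A : Set L) : Prop :=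
  SClosure ρ A ⊆ A

/-- The probabilistic distance from a point to a set: `F_{pB}(x) = sup {F_{pq}(x) : q ∈ B}`. -/
noncomputable def probDistToSet {L : Type*} (ρ : L → L → ℝ → ℝ) (p : L) (B : Set L)
    (x : ℝ) : ℝ :=
  sSup ((fun q => ρ p q x) '' B)

/-- `Γ*_{AB}(x) = inf {F_{pB}(x) : p ∈ A}`. -/
noncomputable def gammaStar {L : Type*} (ρ : L → L → ℝ → ℝ) (A B : Set L) (x : ℝ) : ℝ :=
  sInf ((fun p => probDistToSet ρ p B x) '' A)

/-- `F*_{AB}`, the left-continuous regularization of `Γ*_{AB}`: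
`F*_{AB}(x) = sup_{x' < x} Γ*_{AB}(x')`. -/
noncomputable def fStar {L : Type*} (ρ : L → L → ℝ → ℝ) (A B : Set L) (x : ℝ) : ℝ :=
  sSup (gammaStar ρ A B '' Set.Iio x)

/-- The probabilistic Pompeiu-Hausdorff distance:
`H(A,B)(x) = F_{AB}(x) = min (F*_{AB}(x)) (F*_{BA}(x))`. -/
noncomputable def probHaus {L : Type*} (ρ : L → L → ℝ → ℝ) (A B : Set L) (x : ℝ) : ℝ :=
  min (fStar ρ A B x) (fStar ρ B A x)

/-- Convergence of a sequence of sets with respect to the probabilistic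
Pompeiu-Hausdorff metric `H`. -/
def HConv {L : Type*} (ρ : L → L → ℝ → ℝ) (An : ℕ → Set L) (A : Set L) : Prop :=
  ∀ t : ℝ, 0 < t → ∃ n₀ : ℕ, ∀ n ≥ n₀, 1 - t < probHaus ρ (An n) A t

/-- Cauchy sequence of sets with respect to the probabilistic Pompeiu-Hausdorff metric `H`. -/
def HCauchy {L : Type*} (ρ : L → L → ℝ → ℝ) (An : ℕ → Set L) : Prop :=
  ∀ t : ℝ, 0 < t → ∃ n₀ : ℕ, ∀ m ≥ n₀, ∀ n ≥ n₀, 1 - t < probHaus ρ (An m) (An n) t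

open Set Filter

section ProofAux

lemma ddf_nonneg {F : ℝ → ℝ} (hF : IsDDF F) (x : ℝ) : 0 ≤ F x := by
  rcases le_or_gt x 0 with h | h
  · rw [hF.2.2.2 x h]
  · rw [← hF.2.2.2 0 le_rfl]; exact hF.1 h.le

lemma ddf_sSup_Iio {F : ℝ → ℝ} (hF : IsDDF F) (x : ℝ) : F x = sSup (F '' Set.Iio x) :=
  tendsto_nhds_unique (hF.2.1 x) (hF.1.tendsto_nhdsLT x)

lemma contWithin_of_monotone {F : ℝ → ℝ} (hF : Monotone F) (x : ℝ)
    (h : F x = sSup (F '' Set.Iio x)) : ContinuousWithinAt F (Set.Iio x) x := by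
  have := hF.tendsto_nhdsLT x
  rwa [ContinuousWithinAt, h]

variable {L : Type*} {ρ : L → L → ℝ → ℝ} {p : L} {B : Set L}

lemma pdts_bdd (hDDF : ∀ q ∈ B, IsDDF (ρ p q)) (x : ℝ) :
    BddAbove ((fun q => ρ p q x) '' B) :=
  ⟨1, by rintro _ ⟨q, hq, rfl⟩; exact (hDDF q hq).2.2.1 x⟩

lemma le_pdts (hDDF : ∀ q ∈ B, IsDDF (ρ p q)) {q : L} (hq : q ∈ B) (x : ℝ) :
    ρ p q x ≤ probDistToSet ρ p B x :=
  le_csSup (pdts_bdd hDDF x) ⟨q, hq, rfl⟩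

lemma pdts_le (hB : B.Nonempty) {x c : ℝ} (h : ∀ q ∈ B, ρ p q x ≤ c) :
    probDistToSet ρ p B x ≤ c :=
  csSup_le (hB.image _) (by rintro _ ⟨q, hq, rfl⟩; exact h q hq)

lemma pdts_mono (hB : B.Nonempty) (hDDF : ∀ q ∈ B, IsDDF (ρ p q)) :
    Monotone (probDistToSet ρ p B) := fun x y hxy =>
  pdts_le hB fun q hq => ((hDDF q hq).1 hxy).trans (le_pdts hDDF hq y)

lemma pdts_le_one (hB : B.Nonempty) (hDDF : ∀ q ∈ B, IsDDF (ρ p q)) (x : ℝ) :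
    probDistToSet ρ p B x ≤ 1 :=
  pdts_le hB fun q hq => (hDDF q hq).2.2.1 x

lemma pdts_nonneg (hB : B.Nonempty) (hDDF : ∀ q ∈ B, IsDDF (ρ p q)) (x : ℝ) :
    0 ≤ probDistToSet ρ p B x := by
  obtain ⟨q, hq⟩ := hB
  exact (ddf_nonneg (hDDF q hq) x).trans (le_pdts hDDF hq x)

lemma pdts_nonpos (hB : B.Nonempty) (hDDF : ∀ q ∈ B, IsDDF (ρ p q)) {x : ℝ} (hx : x ≤ 0) :
    probDistToSet ρ p B x = 0 :=
  le_antisymm (pdts_le hB fun q hq => le_of_eq ((hDDF q hq).2.2.2 x hx))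
    (pdts_nonneg hB hDDF x)

lemma pdts_sSup (hB : B.Nonempty) (hDDF : ∀ q ∈ B, IsDDF (ρ p q)) (x : ℝ) :
    probDistToSet ρ p B x = sSup (probDistToSet ρ p B '' Set.Iio x) := by
  have hbdd : BddAbove (probDistToSet ρ p B '' Set.Iio x) :=
    ⟨1, by rintro _ ⟨x', _, rfl⟩; exact pdts_le_one hB hDDF x'⟩
  apply le_antisymm
  · apply pdts_le hB; intro q hq
    rw [ddf_sSup_Iio (hDDF q hq)]
    apply csSup_le ((Set.nonempty_Iio).image _)
    rintro _ ⟨x', hx', rfl⟩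
    exact (le_pdts hDDF hq x').trans (le_csSup hbdd ⟨x', hx', rfl⟩)
  · apply csSup_le (Set.nonempty_Iio.image _)
    rintro _ ⟨x', hx', rfl⟩
    exact pdts_mono hB hDDF hx'.le

lemma pdts_ddf (hB : B.Nonempty) (hDDF : ∀ q ∈ B, IsDDF (ρ p q)) :
    IsDDF (probDistToSet ρ p B) :=
  ⟨pdts_mono hB hDDF,
   fun x => contWithin_of_monotone (pdts_mono hB hDDF) x (pdts_sSup hB hDDF x),
   pdts_le_one hB hDDF, fun _ hx => pdts_nonpos hB hDDF hx⟩

lemma pdts_countable (hB : B.Nonempty) (hDDF : ∀ q ∈ B, IsDDF (ρ p q)) :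
    ∃ f : ℚ × ℕ → L, (∀ i, f i ∈ B) ∧
      ∀ y, (⨆ i, ρ p (f i) y) = probDistToSet ρ p B y := by
  have key : ∀ i : ℚ × ℕ, ∃ a, a ∈ B ∧
      probDistToSet ρ p B (i.1 : ℝ) - (1 : ℝ) / (i.2 + 1) < ρ p a (i.1 : ℝ) := by
    rintro ⟨q, n⟩
    have hpos : (0 : ℝ) < 1 / (n + 1) := by positivity
    have hlt : probDistToSet ρ p B (q : ℝ) - 1 / (n + 1) <
        sSup ((fun a => ρ p a (q : ℝ)) '' B) := by
      show _ < probDistToSet ρ p B (q : ℝ); linarith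
    obtain ⟨_, ⟨a, ha, rfl⟩, h⟩ := exists_lt_of_lt_csSup (hB.image _) hlt
    exact ⟨a, ha, h⟩
  choose f hfB hf using key
  refine ⟨f, hfB, fun y => ?_⟩
  have hbdd : BddAbove (Set.range fun i => ρ p (f i) y) :=
    ⟨1, by rintro _ ⟨i, rfl⟩; exact (hDDF _ (hfB i)).2.2.1 y⟩
  apply le_antisymm
  · exact ciSup_le fun i => le_pdts hDDF (hfB i) y
  · refine le_of_forall_lt fun c hc => ?_
    obtain ⟨_, ⟨a, ha, rfl⟩, hca'⟩ := exists_lt_of_lt_csSup (hB.image _) hc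
    have hca : c < ρ p a y := hca'
    rw [ddf_sSup_Iio (hDDF a ha)] at hca
    obtain ⟨_, ⟨x', hx', rfl⟩, hcx⟩ := exists_lt_of_lt_csSup (Set.nonempty_Iio.image _) hca
    obtain ⟨q, hq1, hq2⟩ := exists_rat_btwn (show x' < y from hx')
    have hcq : c < probDistToSet ρ p B (q : ℝ) :=
      hcx.trans_le (((hDDF a ha).1 hq1.le).trans (le_pdts hDDF ha (q : ℝ)))
    obtain ⟨n, hn⟩ := exists_nat_one_div_lt (show (0:ℝ) < probDistToSet ρ p B (q:ℝ) - c by linarith)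
    have h1 := hf (q, n)
    have h2 : c < ρ p (f (q, n)) (q : ℝ) := by
      simp only at h1; linarith
    have h3 : ρ p (f (q, n)) (q : ℝ) ≤ ρ p (f (q, n)) y :=
      (hDDF _ (hfB (q, n))).1 hq2.le
    exact (h2.trans_le h3).trans_le (le_ciSup hbdd (q, n))

-- gammaStar and fStar lemmas
variable {A : Set L}

lemma gamma_le (hA : A.Nonempty) {a : L} (ha : a ∈ A) (x : ℝ)
    (hDDF : ∀ q r, IsDDF (ρ q r)) (hB : B.Nonempty) :
    gammaStar ρ A B x ≤ probDistToSet ρ a B x :=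
  csInf_le ⟨0, by rintro _ ⟨b, hb, rfl⟩; exact pdts_nonneg hB (fun q _ => hDDF b q) x⟩
    ⟨a, ha, rfl⟩

lemma le_gamma (hA : A.Nonempty) {c x : ℝ} (h : ∀ a ∈ A, c ≤ probDistToSet ρ a B x) :
    c ≤ gammaStar ρ A B x :=
  le_csInf (hA.image _) (by rintro _ ⟨a, ha, rfl⟩; exact h a ha)

lemma gamma_mono (hA : A.Nonempty) (hB : B.Nonempty) (hDDF : ∀ q r, IsDDF (ρ q r)) :
    Monotone (gammaStar ρ A B) := fun x y hxy =>
  le_gamma hA fun a ha =>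
    (gamma_le hA ha x hDDF hB).trans (pdts_mono hB (fun q _ => hDDF a q) hxy)

lemma gamma_nonneg (hA : A.Nonempty) (hB : B.Nonempty) (hDDF : ∀ q r, IsDDF (ρ q r)) (x : ℝ) :
    0 ≤ gammaStar ρ A B x :=
  le_gamma hA fun a _ => pdts_nonneg hB (fun q _ => hDDF a q) x

lemma gamma_le_one (hA : A.Nonempty) (hB : B.Nonempty) (hDDF : ∀ q r, IsDDF (ρ q r)) (x : ℝ) :
    gammaStar ρ A B x ≤ 1 := by
  obtain ⟨a, ha⟩ := hA
  exact (gamma_le ⟨a, ha⟩ ha x hDDF hB).trans (pdts_le_one hB (fun q _ => hDDF a q) x)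

lemma fStar_bdd (hA : A.Nonempty) (hB : B.Nonempty) (hDDF : ∀ q r, IsDDF (ρ q r)) (x : ℝ) :
    BddAbove (gammaStar ρ A B '' Set.Iio x) :=
  ⟨1, by rintro _ ⟨x', _, rfl⟩; exact gamma_le_one hA hB hDDF x'⟩

lemma fStar_le_gamma (hA : A.Nonempty) (hB : B.Nonempty) (hDDF : ∀ q r, IsDDF (ρ q r)) (x : ℝ) :
    fStar ρ A B x ≤ gammaStar ρ A B x :=
  csSup_le (Set.nonempty_Iio.image _)
    (by rintro _ ⟨x', hx', rfl⟩; exact gamma_mono hA hB hDDF hx'.le)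

lemma gamma_le_fStar (hA : A.Nonempty) (hB : B.Nonempty) (hDDF : ∀ q r, IsDDF (ρ q r))
    {x' x : ℝ} (h : x' < x) : gammaStar ρ A B x' ≤ fStar ρ A B x :=
  le_csSup (fStar_bdd hA hB hDDF x) ⟨x', h, rfl⟩

lemma fStar_mono (hA : A.Nonempty) (hB : B.Nonempty) (hDDF : ∀ q r, IsDDF (ρ q r)) :
    Monotone (fStar ρ A B) := fun x y hxy =>
  csSup_le_csSup (fStar_bdd hA hB hDDF y) (Set.nonempty_Iio.image _)
    (Set.image_mono (Set.Iio_subset_Iio hxy))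

lemma fStar_nonneg (hA : A.Nonempty) (hB : B.Nonempty) (hDDF : ∀ q r, IsDDF (ρ q r)) (x : ℝ) :
    0 ≤ fStar ρ A B x :=
  (gamma_nonneg hA hB hDDF (x - 1)).trans
    (gamma_le_fStar hA hB hDDF (by linarith))

lemma fStar_le_one (hA : A.Nonempty) (hB : B.Nonempty) (hDDF : ∀ q r, IsDDF (ρ q r)) (x : ℝ) :
    fStar ρ A B x ≤ 1 :=
  csSup_le (Set.nonempty_Iio.image _)
    (by rintro _ ⟨x', _, rfl⟩; exact gamma_le_one hA hB hDDF x')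

lemma fStar_nonpos (hA : A.Nonempty) (hB : B.Nonempty) (hDDF : ∀ q r, IsDDF (ρ q r))
    {x : ℝ} (hx : x ≤ 0) : fStar ρ A B x = 0 := by
  apply le_antisymm _ (fStar_nonneg hA hB hDDF x)
  apply csSup_le (Set.nonempty_Iio.image _)
  rintro _ ⟨x', hx', rfl⟩
  have : gammaStar ρ A B x' = 0 := by
    apply le_antisymm _ (gamma_nonneg hA hB hDDF x')
    obtain ⟨a, ha⟩ := hA
    refine (gamma_le ⟨a, ha⟩ ha x' hDDF hB).trans (le_of_eq ?_)
    exact pdts_nonpos hB (fun q _ => hDDF a q) (by simp at hx' ⊢; linarith)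
  exact this.le

lemma fStar_sSup (hA : A.Nonempty) (hB : B.Nonempty) (hDDF : ∀ q r, IsDDF (ρ q r)) (x : ℝ) :
    fStar ρ A B x = sSup (fStar ρ A B '' Set.Iio x) := by
  have hbdd : BddAbove (fStar ρ A B '' Set.Iio x) :=
    ⟨1, by rintro _ ⟨x', _, rfl⟩; exact fStar_le_one hA hB hDDF x'⟩
  apply le_antisymm
  · apply csSup_le (Set.nonempty_Iio.image _)
    rintro _ ⟨x', hx', rfl⟩
    have hx0 : x' < x := hx'
    have h1 : gammaStar ρ A B x' ≤ fStar ρ A B ((x' + x) / 2) :=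
      gamma_le_fStar hA hB hDDF (by linarith)
    exact h1.trans (le_csSup hbdd ⟨(x' + x) / 2, by simp only [Set.mem_Iio]; linarith, rfl⟩)
  · apply csSup_le (Set.nonempty_Iio.image _)
    rintro _ ⟨x', hx', rfl⟩
    exact fStar_mono hA hB hDDF hx'.le

lemma fStar_ddf (hA : A.Nonempty) (hB : B.Nonempty) (hDDF : ∀ q r, IsDDF (ρ q r)) :
    IsDDF (fStar ρ A B) :=
  ⟨fStar_mono hA hB hDDF,
   fun x => contWithin_of_monotone (fStar_mono hA hB hDDF) x (fStar_sSup hA hB hDDF x),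
   fStar_le_one hA hB hDDF, fun _ hx => fStar_nonpos hA hB hDDF hx⟩

lemma fStar_le_pdts (hA : A.Nonempty) (hB : B.Nonempty) (hDDF : ∀ q r, IsDDF (ρ q r))
    {a : L} (ha : a ∈ A) (x : ℝ) : fStar ρ A B x ≤ probDistToSet ρ a B x :=
  (fStar_le_gamma hA hB hDDF x).trans (gamma_le hA ha x hDDF hB)

end ProofAux


/-- For nonempty closed `A, B ⊆ L` and `p ∈ L`: `F_{pB} ≥ τ (F_{pA}) (F*_{AB})`. -/
theorem probDistToSet_ge_tau {L : Type*} (ρ : L → L → ℝ → ℝ)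
    (τ : (ℝ → ℝ) → (ℝ → ℝ) → (ℝ → ℝ)) (hPM : IsPMSpace ρ τ)
    (hsup : SupContinuous τ) (A B : Set L) (hA : A.Nonempty) (hAcl : SClosed ρ A)
    (hB : B.Nonempty) (hBcl : SClosed ρ B) (p : L) :
    τ (probDistToSet ρ p A) (fStar ρ A B) ≤ probDistToSet ρ p B := by
  have hDDF : ∀ q r, IsDDF (ρ q r) := hPM.isDDF
  have hfS : IsDDF (fStar ρ A B) := fStar_ddf hA hB hDDF
  intro x
  obtain ⟨f, hfA, hf⟩ := pdts_countable hA (fun q _ => hDDF p q)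
  have heq : probDistToSet ρ p A = fun y => ⨆ i, ρ p (f i) y :=
    funext fun y => (hf y).symm
  rw [heq, hsup (ℚ × ℕ) (fun i => ρ p (f i)) (fStar ρ A B)
    (fun i => hDDF p (f i)) hfS x]
  apply ciSup_le
  intro i
  have haB : IsDDF (probDistToSet ρ (f i) B) := pdts_ddf hB (fun q _ => hDDF (f i) q)
  have h1 : τ (ρ p (f i)) (fStar ρ A B) x ≤ τ (ρ p (f i)) (probDistToSet ρ (f i) B) x :=
    hPM.triangleFn.mono _ _ _ _ (hDDF p (f i)) (hDDF p (f i)) hfS haB le_rfl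
      (fun y => fStar_le_pdts hA hB hDDF (hfA i) y) x
  refine h1.trans ?_
  rw [hPM.triangleFn.comm _ _ (hDDF p (f i)) haB]
  obtain ⟨g, hgB, hg⟩ := pdts_countable hB (fun q _ => hDDF (f i) q)
  have heq2 : probDistToSet ρ (f i) B = fun y => ⨆ j, ρ (f i) (g j) y :=
    funext fun y => (hg y).symm
  rw [heq2, hsup (ℚ × ℕ) (fun j => ρ (f i) (g j)) (ρ p (f i))
    (fun j => hDDF (f i) (g j)) (hDDF p (f i)) x]
  apply ciSup_le
  intro j
  rw [hPM.triangleFn.comm _ _ (hDDF (f i) (g j)) (hDDF p (f i))]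
  exact (hPM.tri_ineq p (f i) (g j) x).trans (le_pdts (fun q _ => hDDF p q) (hgB j) x)
end
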